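/- For i = 1, 2, let Gᵢ be an rᵢ-regular graph on nᵢ vertices with adjacency spectrum {r₁ = λ₁, λ₂, …, λ_{n₁}} for G₁ and {r₂ = μ₁, μ₂, …, μ_{n₂}} for G₂. Then the distance signless Laplacian spectrum of the join G₁∇G₂ consists of the eigenvalues 2n₁ + n₂ − r₁ − λⱼ − 4 for j = 2, 3, …, n₁, the eigenvalues 2n₂ + n₁ − r₂ − μⱼ − 4 for j = 2, 3, …, n₂, and the two eigenvalues (5/2)(n₁ + n₂) − r₁ − r₂ − 4 ± √Δ/2, where Δ = 9n₁² − 14n₁n₂ − 12n₁r₁ + 12n₁r₂ + 9n₂² + 12n₂r₁ − 12n₂r₂ + 4r₁² − 8r₁r₂ + 4r₂². -/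

import Mathlib

open Finset

/-- The distance matrix of a simple graph, with real entries. -/
noncomputable def distMatrix {V : Type*} [Fintype V] (G : SimpleGraph V) : Matrix V V ℝ :=
  Matrix.of fun u v => (G.dist u v : ℝ)

/-- The transmission of a vertex: the sum of distances to all other vertices. -/
noncomputable def transmission {V : Type*} [Fintype V] (G : SimpleGraph V) (u : V) : ℝ :=
  ∑ v, (G.dist u v : ℝ)

/-- The second transmission degree of a vertex: `T_i = ∑_j d(v_i, v_j) Tr_j`. -/
noncomputable def secondTransmission {V : Type*} [Fintype V] (G : SimpleGraph V) (u : V) : ℝ :=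
  ∑ v, (G.dist u v : ℝ) * transmission G v

/-- The distance Laplacian matrix `L(G) = Tr(G) - D(G)`. -/
noncomputable def distLaplacian {V : Type*} [Fintype V] [DecidableEq V] (G : SimpleGraph V) :
    Matrix V V ℝ :=
  Matrix.diagonal (transmission G) - distMatrix G

/-- The distance signless Laplacian matrix `Q(G) = Tr(G) + D(G)`. -/
noncomputable def distSignlessLaplacian {V : Type*} [Fintype V] [DecidableEq V]
    (G : SimpleGraph V) : Matrix V V ℝ :=
  Matrix.diagonal (transmission G) + distMatrix G

/-- The generalized distance matrix `D_α(G) = α Tr(G) + (1 - α) D(G)`. -/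
noncomputable def genDistMatrix {V : Type*} [Fintype V] [DecidableEq V] (a : ℝ)
    (G : SimpleGraph V) : Matrix V V ℝ :=
  a • Matrix.diagonal (transmission G) + (1 - a) • distMatrix G

/-- The join `G₁ ∇ G₂`: disjoint union of `G₁` and `G₂` together with all edges
between the two parts. -/
def joinGraph {V₁ V₂ : Type*} (G₁ : SimpleGraph V₁) (G₂ : SimpleGraph V₂) :
    SimpleGraph (V₁ ⊕ V₂) where
  Adj x y :=
    match x, y with
    | Sum.inl u, Sum.inl v => G₁.Adj u v
    | Sum.inr u, Sum.inr v => G₂.Adj u v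
    | Sum.inl _, Sum.inr _ => True
    | Sum.inr _, Sum.inl _ => True
  symm := by
    constructor
    rintro (u | u) (v | v) h
    · exact SimpleGraph.Adj.symm (G := G₁) h
    · exact h
    · exact h
    · exact SimpleGraph.Adj.symm (G := G₂) h
  loopless := by
    constructor
    rintro (u | u) h
    · exact SimpleGraph.Adj.ne (G := G₁) h rfl
    · exact SimpleGraph.Adj.ne (G := G₂) h rfl

open Polynomial Matrix

noncomputable section Helpers

variable {L : Type*} [Field L]

/-- mapping the charmatrix by `eval₂ f y` gives `y • 1 - M.map f`. -/
lemma helper_charmatrix_map {m : Type*} [Fintype m] [DecidableEq m]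
    (f : ℝ →+* L) (y : L) (M : Matrix m m ℝ) :
    (Matrix.charmatrix M).map (Polynomial.eval₂ f y) = y • (1 : Matrix m m L) - M.map f := by
  ext i j
  by_cases h : i = j
  · subst h
    simp [Matrix.charmatrix_apply_eq, Matrix.one_apply]
  · simp [Matrix.charmatrix_apply_ne _ _ _ h, Matrix.one_apply, h]

lemma helper_det_smul_one_sub_map {m : Type*} [Fintype m] [DecidableEq m]
    (f : ℝ →+* L) (y : L) (M : Matrix m m ℝ) :
    (y • (1 : Matrix m m L) - M.map f).det = M.charpoly.eval₂ f y := by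
  rw [← helper_charmatrix_map f y M, Matrix.charpoly, ← Polynomial.coe_eval₂RingHom,
    RingHom.map_det, RingHom.mapMatrix_apply]

lemma helper_det_prod {m : Type*} [Fintype m] [DecidableEq m]
    (f : ℝ →+* L) (y : L) (M : Matrix m m ℝ) (g : m → ℝ)
    (h : M.charpoly = (Finset.univ.val.map fun v => (X : ℝ[X]) - C (g v)).prod) :
    (y • (1 : Matrix m m L) - M.map f).det = ∏ v, (y - f (g v)) := by
  rw [helper_det_smul_one_sub_map f y M, h, ← Polynomial.coe_eval₂RingHom,
    map_multiset_prod, Multiset.map_map, Finset.prod_eq_multiset_prod]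
  congr 1
  exact Multiset.map_congr rfl fun v _ => by simp

lemma helper_det_prod_add {m : Type*} [Fintype m] [DecidableEq m]
    (f : ℝ →+* L) (y : L) (M : Matrix m m ℝ) (g : m → ℝ)
    (h : M.charpoly = (Finset.univ.val.map fun v => (X : ℝ[X]) - C (g v)).prod) :
    (y • (1 : Matrix m m L) + M.map f).det = ∏ v, (y + f (g v)) := by
  have h1 := helper_det_prod f (-y) M g h
  have h2 : (-y) • (1 : Matrix m m L) - M.map f = -(y • (1 : Matrix m m L) + M.map f) := by
    ext i j; simp [Matrix.one_apply]; ring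
  rw [h2, Matrix.det_neg] at h1
  have h3 : ∀ v : m, -y - f (g v) = (-1) * (y + f (g v)) := fun v => by ring
  rw [Finset.prod_congr rfl (fun v _ => h3 v), Finset.prod_mul_distrib,
    Finset.prod_const, Finset.card_univ] at h1
  exact mul_left_cancel₀ (pow_ne_zero _ (by norm_num : (-1 : L) ≠ 0)) h1

lemma helper_inv_mulVec_ones {m : Type*} [Fintype m] [DecidableEq m]
    (N : Matrix m m L) (s : L) (hdet : N.det ≠ 0) (hs : s ≠ 0)
    (h : N *ᵥ (fun _ => (1 : L)) = fun _ => s) :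
    N⁻¹ *ᵥ (fun _ => (1 : L)) = fun _ => s⁻¹ := by
  have hunit : IsUnit N.det := isUnit_iff_ne_zero.mpr hdet
  have h2 : N⁻¹ *ᵥ (N *ᵥ (fun _ => (1 : L))) = fun _ => (1 : L) := by
    rw [Matrix.mulVec_mulVec, Matrix.nonsing_inv_mul N hunit, Matrix.one_mulVec]
  rw [h] at h2
  funext i
  have h4 := congrFun h2 i
  simp only [Matrix.mulVec, dotProduct] at h4 ⊢
  rw [← Finset.sum_mul] at h4
  have h5 := (eq_div_iff hs).mpr h4
  simpa [one_div] using h5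

/-- Matrix determinant lemma for rank one all-ones update. -/
lemma helper_det_sub_ones {m : Type*} [Fintype m] [DecidableEq m]
    (N : Matrix m m L) (c s : L) (hs : s ≠ 0) (hdet : N.det ≠ 0)
    (hN : N *ᵥ (fun _ => (1 : L)) = fun _ => s) :
    (N - c • Matrix.of (fun _ _ => (1 : L))).det
      = N.det * (1 - c * (Fintype.card m) / s) := by
  have hunit : IsUnit N.det := isUnit_iff_ne_zero.mpr hdet
  have hinv := helper_inv_mulVec_ones N s hdet hs hN
  have hrow : ∀ k, ∑ l, N⁻¹ k l = s⁻¹ := by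
    intro k
    have := congrFun hinv k
    simpa [Matrix.mulVec, dotProduct] using this
  have heq : N - c • Matrix.of (fun _ _ => (1 : L))
      = N + Matrix.replicateCol Unit (fun _ => -c) * Matrix.replicateRow Unit (fun _ => (1 : L)) := by
    ext i j
    simp [Matrix.mul_apply]
    ring
  rw [heq, Matrix.det_add_replicateCol_mul_replicateRow hunit]
  congr 1
  rw [Matrix.det_unique]
  simp only [Matrix.add_apply, Matrix.one_apply_eq, Matrix.mul_apply, Matrix.replicateRow_apply,
    Matrix.replicateCol_apply, Finset.univ_unique]
  have : ∑ j : m, (∑ i : m, 1 * N⁻¹ i j) * (-c) = -c * (Fintype.card m) * s⁻¹ := by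
    simp only [one_mul]
    rw [← Finset.sum_mul, Finset.sum_comm]
    simp only [hrow]
    simp [Finset.card_univ]
    ring
  rw [this]
  field_simp
  ring

end Helpers

section GraphLemmas

variable {V₁ V₂ : Type*} (G₁ : SimpleGraph V₁) (G₂ : SimpleGraph V₂)

lemma joinGraph_adj_inl_inr (u : V₁) (v : V₂) : (joinGraph G₁ G₂).Adj (Sum.inl u) (Sum.inr v) :=
  trivial

lemma joinGraph_adj_inr_inl (u : V₂) (v : V₁) : (joinGraph G₁ G₂).Adj (Sum.inr u) (Sum.inl v) :=
  trivial

lemma joinGraph_adj_inl_inl (u v : V₁) :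
    (joinGraph G₁ G₂).Adj (Sum.inl u) (Sum.inl v) ↔ G₁.Adj u v := Iff.rfl

lemma joinGraph_adj_inr_inr (u v : V₂) :
    (joinGraph G₁ G₂).Adj (Sum.inr u) (Sum.inr v) ↔ G₂.Adj u v := Iff.rfl

open Classical in
lemma joinGraph_dist_eq (a : V₁) (b : V₂) (x y : V₁ ⊕ V₂) :
    ((joinGraph G₁ G₂).dist x y : ℝ) =
      if x = y then 0 else if (joinGraph G₁ G₂).Adj x y then 1 else 2 := by
  by_cases hxy : x = y
  · simp [hxy, SimpleGraph.dist_self]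
  by_cases hadj : (joinGraph G₁ G₂).Adj x y
  · simp [hxy, hadj, SimpleGraph.dist_eq_one_iff_adj.mpr hadj]
  · have hz : ∃ z, (joinGraph G₁ G₂).Adj x z ∧ (joinGraph G₁ G₂).Adj z y := by
      rcases x with u | u <;> rcases y with v | v
      · exact ⟨Sum.inr b, joinGraph_adj_inl_inr _ _ _ _, joinGraph_adj_inr_inl _ _ _ _⟩
      · exact absurd (joinGraph_adj_inl_inr G₁ G₂ u v) hadj
      · exact absurd (joinGraph_adj_inr_inl G₁ G₂ u v) hadj
      · exact ⟨Sum.inl a, joinGraph_adj_inr_inl _ _ _ _, joinGraph_adj_inl_inr _ _ _ _⟩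
    obtain ⟨z, h1, h2⟩ := hz
    have hle : (joinGraph G₁ G₂).dist x y ≤ 2 := by
      simpa using SimpleGraph.dist_le
        (SimpleGraph.Walk.cons h1 (SimpleGraph.Walk.cons h2 SimpleGraph.Walk.nil))
    have h0 : (joinGraph G₁ G₂).dist x y ≠ 0 := by
      rw [SimpleGraph.dist_ne_zero_iff_ne_and_reachable]
      exact ⟨hxy, ⟨SimpleGraph.Walk.cons h1 (SimpleGraph.Walk.cons h2 SimpleGraph.Walk.nil)⟩⟩
    have h1' : (joinGraph G₁ G₂).dist x y ≠ 1 := fun h =>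
      hadj (SimpleGraph.dist_eq_one_iff_adj.mp h)
    have : (joinGraph G₁ G₂).dist x y = 2 := by omega
    simp [hxy, hadj, this]

lemma sum_ite_adj {V : Type*} [Fintype V] (G : SimpleGraph V) [DecidableRel G.Adj] {r : ℕ}
    (hreg : G.IsRegularOfDegree r) (u : V) :
    ∑ v, (if G.Adj u v then (1:ℝ) else 0) = r := by
  rw [Finset.sum_boole]
  have h1 : Finset.univ.filter (fun v => G.Adj u v) = G.neighborFinset u := by
    ext v; simp [SimpleGraph.mem_neighborFinset]
  have h2 : (G.neighborFinset u).card = r := hreg u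
  rw [h1, h2]

variable [Fintype V₁] [Fintype V₂]

open Classical in
lemma transmission_join_inl [DecidableRel G₁.Adj] {r₁ : ℕ}
    (hreg₁ : G₁.IsRegularOfDegree r₁) (a : V₁) (b : V₂) (u : V₁) :
    transmission (joinGraph G₁ G₂) (Sum.inl u)
      = 2 * (Fintype.card V₁ : ℝ) + (Fintype.card V₂ : ℝ) - r₁ - 2 := by
  unfold transmission
  rw [Fintype.sum_sum_type]
  have hsum2 : ∑ v : V₂, ((joinGraph G₁ G₂).dist (Sum.inl u) (Sum.inr v) : ℝ)
      = Fintype.card V₂ := by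
    have : ∀ v : V₂, ((joinGraph G₁ G₂).dist (Sum.inl u) (Sum.inr v) : ℝ) = 1 := by
      intro v
      rw [joinGraph_dist_eq G₁ G₂ a b]
      simp [joinGraph_adj_inl_inr]
    simp [this, Finset.card_univ]
  have hterm : ∀ v : V₁, ((joinGraph G₁ G₂).dist (Sum.inl u) (Sum.inl v) : ℝ)
      = 2 - (if u = v then 2 else 0) - (if G₁.Adj u v then 1 else 0) := by
    intro v
    rw [joinGraph_dist_eq G₁ G₂ a b]
    by_cases h1 : u = v
    · subst h1; simp [G₁.irrefl]
    · have hne : (Sum.inl u : V₁ ⊕ V₂) ≠ Sum.inl v := by simpa using h1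
      by_cases h2 : G₁.Adj u v
      · simp [hne, h1, joinGraph_adj_inl_inl, h2]; norm_num
      · have hne2 : ¬ (joinGraph G₁ G₂).Adj (Sum.inl u) (Sum.inl v) := by
          rw [joinGraph_adj_inl_inl]; exact h2
        simp [hne, h1, hne2, h2]
  have hsum1 : ∑ v : V₁, ((joinGraph G₁ G₂).dist (Sum.inl u) (Sum.inl v) : ℝ)
      = 2 * (Fintype.card V₁ : ℝ) - 2 - r₁ := by
    rw [Finset.sum_congr rfl fun v _ => hterm v, Finset.sum_sub_distrib,
      Finset.sum_sub_distrib, sum_ite_adj G₁ hreg₁ u]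
    simp [Finset.card_univ, mul_comm]
  rw [hsum1, hsum2]
  ring

open Classical in
lemma transmission_join_inr [DecidableRel G₂.Adj] {r₂ : ℕ}
    (hreg₂ : G₂.IsRegularOfDegree r₂) (a : V₁) (b : V₂) (u : V₂) :
    transmission (joinGraph G₁ G₂) (Sum.inr u)
      = 2 * (Fintype.card V₂ : ℝ) + (Fintype.card V₁ : ℝ) - r₂ - 2 := by
  unfold transmission
  rw [Fintype.sum_sum_type]
  have hsum2 : ∑ v : V₁, ((joinGraph G₁ G₂).dist (Sum.inr u) (Sum.inl v) : ℝ)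
      = Fintype.card V₁ := by
    have : ∀ v : V₁, ((joinGraph G₁ G₂).dist (Sum.inr u) (Sum.inl v) : ℝ) = 1 := by
      intro v
      rw [joinGraph_dist_eq G₁ G₂ a b]
      simp [joinGraph_adj_inr_inl]
    simp [this, Finset.card_univ]
  have hterm : ∀ v : V₂, ((joinGraph G₁ G₂).dist (Sum.inr u) (Sum.inr v) : ℝ)
      = 2 - (if u = v then 2 else 0) - (if G₂.Adj u v then 1 else 0) := by
    intro v
    rw [joinGraph_dist_eq G₁ G₂ a b]
    by_cases h1 : u = v
    · subst h1; simp [G₂.irrefl]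
    · have hne : (Sum.inr u : V₁ ⊕ V₂) ≠ Sum.inr v := by simpa using h1
      by_cases h2 : G₂.Adj u v
      · simp [hne, h1, joinGraph_adj_inr_inr, h2]; norm_num
      · have hne2 : ¬ (joinGraph G₁ G₂).Adj (Sum.inr u) (Sum.inr v) := by
          rw [joinGraph_adj_inr_inr]; exact h2
        simp [hne, h1, hne2, h2]
  have hsum1 : ∑ v : V₂, ((joinGraph G₁ G₂).dist (Sum.inr u) (Sum.inr v) : ℝ)
      = 2 * (Fintype.card V₂ : ℝ) - 2 - r₂ := by
    rw [Finset.sum_congr rfl fun v _ => hterm v, Finset.sum_sub_distrib,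
      Finset.sum_sub_distrib, sum_ite_adj G₂ hreg₂ u]
    simp [Finset.card_univ, mul_comm]
  rw [hsum1, hsum2]
  ring

end GraphLemmas

open Classical in
lemma Q_join_block {V₁ V₂ : Type*} [Fintype V₁] [DecidableEq V₁] [Fintype V₂] [DecidableEq V₂]
    (G₁ : SimpleGraph V₁) (G₂ : SimpleGraph V₂)
    [DecidableRel G₁.Adj] [DecidableRel G₂.Adj] {r₁ r₂ : ℕ}
    (hreg₁ : G₁.IsRegularOfDegree r₁) (hreg₂ : G₂.IsRegularOfDegree r₂)
    (a : V₁) (b : V₂) :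
    distSignlessLaplacian (joinGraph G₁ G₂) =
      Matrix.fromBlocks
        ((2 * (Fintype.card V₁ : ℝ) + (Fintype.card V₂ : ℝ) - r₁ - 4) • (1 : Matrix V₁ V₁ ℝ)
          + 2 • Matrix.of (fun _ _ => (1:ℝ)) - G₁.adjMatrix ℝ)
        (Matrix.of fun _ _ => (1:ℝ))
        (Matrix.of fun _ _ => (1:ℝ))
        ((2 * (Fintype.card V₂ : ℝ) + (Fintype.card V₁ : ℝ) - r₂ - 4) • (1 : Matrix V₂ V₂ ℝ)
          + 2 • Matrix.of (fun _ _ => (1:ℝ)) - G₂.adjMatrix ℝ) := by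
  ext x y
  rcases x with u | u <;> rcases y with v | v
  · simp only [distSignlessLaplacian, distMatrix, Matrix.add_apply, Matrix.of_apply,
      Matrix.fromBlocks_apply₁₁, Matrix.sub_apply, Matrix.smul_apply, Matrix.one_apply,
      SimpleGraph.adjMatrix_apply, Matrix.diagonal_apply]
    rw [joinGraph_dist_eq G₁ G₂ a b]
    by_cases h1 : u = v
    · subst h1
      rw [transmission_join_inl G₁ G₂ hreg₁ a b u]
      simp [G₁.irrefl]
      ring
    · have hne : (Sum.inl u : V₁ ⊕ V₂) ≠ Sum.inl v := by simpa using h1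
      by_cases h2 : G₁.Adj u v
      · have hadj : (joinGraph G₁ G₂).Adj (Sum.inl u) (Sum.inl v) := h2
        simp [hne, h1, hadj, h2]
        norm_num
      · have hne2 : ¬ (joinGraph G₁ G₂).Adj (Sum.inl u) (Sum.inl v) := h2
        simp [hne, h1, hne2, h2]
  · simp only [distSignlessLaplacian, distMatrix, Matrix.add_apply, Matrix.of_apply,
      Matrix.fromBlocks_apply₁₂, Matrix.diagonal_apply]
    rw [joinGraph_dist_eq G₁ G₂ a b]
    simp [joinGraph_adj_inl_inr]
  · simp only [distSignlessLaplacian, distMatrix, Matrix.add_apply, Matrix.of_apply,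
      Matrix.fromBlocks_apply₂₁, Matrix.diagonal_apply]
    rw [joinGraph_dist_eq G₁ G₂ a b]
    simp [joinGraph_adj_inr_inl]
  · simp only [distSignlessLaplacian, distMatrix, Matrix.add_apply, Matrix.of_apply,
      Matrix.fromBlocks_apply₂₂, Matrix.sub_apply, Matrix.smul_apply, Matrix.one_apply,
      SimpleGraph.adjMatrix_apply, Matrix.diagonal_apply]
    rw [joinGraph_dist_eq G₁ G₂ a b]
    by_cases h1 : u = v
    · subst h1
      rw [transmission_join_inr G₁ G₂ hreg₂ a b u]
      simp [G₂.irrefl]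
      ring
    · have hne : (Sum.inr u : V₁ ⊕ V₂) ≠ Sum.inr v := by simpa using h1
      by_cases h2 : G₂.Adj u v
      · have hadj : (joinGraph G₁ G₂).Adj (Sum.inr u) (Sum.inr v) := h2
        simp [hne, h1, hadj, h2]
        norm_num
      · have hne2 : ¬ (joinGraph G₁ G₂).Adj (Sum.inr u) (Sum.inr v) := h2
        simp [hne, h1, hne2, h2]

section MainCalc

variable {L : Type*} [Field L]

lemma adjMatrix_map_ringHom {W : Type*} [Fintype W] (G : SimpleGraph W) [DecidableRel G.Adj]
    (f : ℝ →+* L) : (G.adjMatrix ℝ).map f = G.adjMatrix L := by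
  ext i j
  simp [SimpleGraph.adjMatrix, apply_ite f]

lemma ones_mulVec_ones {m : Type*} [Fintype m] :
    (Matrix.of fun _ _ => (1:L) : Matrix m m L) *ᵥ (fun _ => (1:L))
      = fun _ => (Fintype.card m : L) := by
  funext i
  simp [Matrix.mulVec, dotProduct, Finset.card_univ]

lemma adjK_mulVec_ones {W : Type*} [Fintype W] (G : SimpleGraph W) [DecidableRel G.Adj]
    {r : ℕ} (hreg : G.IsRegularOfDegree r) :
    (G.adjMatrix L) *ᵥ (fun _ => (1:L)) = fun _ => (r : L) := by
  funext i
  have := SimpleGraph.adjMatrix_mulVec_const_apply_of_regular (α := L) (a := (1:L)) hreg (v := i)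
  simpa using this

lemma helper_fromBlocks_sub {n m : Type*} {A A' : Matrix n n L} {B B' : Matrix n m L}
    {C C' : Matrix m n L} {D D' : Matrix m m L} :
    Matrix.fromBlocks A B C D - Matrix.fromBlocks A' B' C' D'
      = Matrix.fromBlocks (A - A') (B - B') (C - C') (D - D') := by
  ext (i | i) (j | j) <;> simp

set_option maxHeartbeats 1000000 in
lemma main_calc_aux {V₁ V₂ : Type*} [Fintype V₁] [DecidableEq V₁] [Fintype V₂] [DecidableEq V₂]
    (G₁ : SimpleGraph V₁) (G₂ : SimpleGraph V₂)
    [DecidableRel G₁.Adj] [DecidableRel G₂.Adj] {r₁ r₂ : ℕ}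
    (hreg₁ : G₁.IsRegularOfDegree r₁) (hreg₂ : G₂.IsRegularOfDegree r₂)
    (lam : V₁ → ℝ) (mu : V₂ → ℝ)
    (hA₁ : (G₁.adjMatrix ℝ).charpoly
      = (Finset.univ.val.map fun v => (X : ℝ[X]) - C (lam v)).prod)
    (hA₂ : (G₂.adjMatrix ℝ).charpoly
      = (Finset.univ.val.map fun v => (X : ℝ[X]) - C (mu v)).prod)
    (w₁ : V₁) (hw₁ : lam w₁ = r₁) (w₂ : V₂) (hw₂ : mu w₂ = r₂)
    (ρp ρm : ℝ)
    (hsum : ρp + ρm = (4 * (Fintype.card V₁ : ℝ) + (Fintype.card V₂ : ℝ) - 2 * r₁ - 4)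
        + (4 * (Fintype.card V₂ : ℝ) + (Fintype.card V₁ : ℝ) - 2 * r₂ - 4))
    (hprod : ρp * ρm = (4 * (Fintype.card V₁ : ℝ) + (Fintype.card V₂ : ℝ) - 2 * r₁ - 4)
        * (4 * (Fintype.card V₂ : ℝ) + (Fintype.card V₁ : ℝ) - 2 * r₂ - 4)
        - (Fintype.card V₁ : ℝ) * (Fintype.card V₂ : ℝ))
    (Φ : Polynomial ℝ →+* L)
    (hxc0 : ∀ c : ℝ, Φ (Polynomial.X - Polynomial.C c) ≠ 0) :
    Φ ((distSignlessLaplacian (joinGraph G₁ G₂)).charpoly) = Φ (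
      ((Finset.univ.erase w₁).val.map fun v =>
          (X : ℝ[X]) - C (2 * (Fintype.card V₁ : ℝ) + (Fintype.card V₂ : ℝ)
            - r₁ - lam v - 4)).prod *
      ((Finset.univ.erase w₂).val.map fun v =>
          (X : ℝ[X]) - C (2 * (Fintype.card V₂ : ℝ) + (Fintype.card V₁ : ℝ)
            - r₂ - mu v - 4)).prod *
      ((X - C ρp) * (X - C ρm))) := by
  classical
  set ψ : ℝ →+* L := Φ.comp Polynomial.C with hψdef
  set x : L := Φ Polynomial.X with hxdef
  have hXC : ∀ c : ℝ, Φ (Polynomial.X - Polynomial.C c) = x - ψ c := by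
    intro c; rw [_root_.map_sub, hxdef, hψdef]; simp
  have hxc : ∀ c : ℝ, x - ψ c ≠ 0 := by
    intro c
    rw [← hXC]
    exact hxc0 c
  have hφeval : ∀ p : ℝ[X], Polynomial.eval₂ ψ x p = Φ p := by
    intro p
    have h : Polynomial.eval₂RingHom ψ x = Φ := by
      apply Polynomial.ringHom_ext
      · intro a; simp [hψdef]
      · simp [hxdef]
    rw [← Polynomial.coe_eval₂RingHom, h]
  set m₁ : ℝ := (Fintype.card V₁ : ℝ) with hm₁
  set m₂ : ℝ := (Fintype.card V₂ : ℝ) with hm₂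
  set β₁ : ℝ := 2 * m₁ + m₂ - (r₁ : ℝ) - 4 with hβ₁
  set β₂ : ℝ := 2 * m₂ + m₁ - (r₂ : ℝ) - 4 with hβ₂
  set δ₁ : ℝ := β₁ - (r₁ : ℝ) with hδ₁
  set δ₂ : ℝ := β₂ - (r₂ : ℝ) with hδ₂
  set γ₂ : ℝ := δ₂ + 2 * m₂ with hγ₂
  have hψm₁ : ψ m₁ = (Fintype.card V₁ : L) := by rw [hm₁]; exact _root_.map_natCast ψ _
  have hψm₂ : ψ m₂ = (Fintype.card V₂ : L) := by rw [hm₂]; exact _root_.map_natCast ψ _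
  -- row sums
  have hN₁vec : ((x - ψ β₁) • (1 : Matrix V₁ V₁ L) + G₁.adjMatrix L) *ᵥ (fun _ => (1:L))
      = fun _ => (x - ψ δ₁) := by
    rw [Matrix.add_mulVec, Matrix.smul_mulVec, Matrix.one_mulVec,
      adjK_mulVec_ones G₁ hreg₁]
    funext i
    simp only [Pi.add_apply, Pi.smul_apply, smul_eq_mul, mul_one]
    rw [hδ₁, hβ₁]
    simp only [_root_.map_sub, _root_.map_add, _root_.map_mul, _root_.map_natCast, _root_.map_ofNat]
    ring
  have hN₂vec : ((x - ψ β₂) • (1 : Matrix V₂ V₂ L) + G₂.adjMatrix L) *ᵥ (fun _ => (1:L))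
      = fun _ => (x - ψ δ₂) := by
    rw [Matrix.add_mulVec, Matrix.smul_mulVec, Matrix.one_mulVec,
      adjK_mulVec_ones G₂ hreg₂]
    funext i
    simp only [Pi.add_apply, Pi.smul_apply, smul_eq_mul, mul_one]
    rw [hδ₂, hβ₂]
    simp only [_root_.map_sub, _root_.map_add, _root_.map_mul, _root_.map_natCast, _root_.map_ofNat]
    ring
  -- determinants of N
  have hdetN₁ : ((x - ψ β₁) • (1 : Matrix V₁ V₁ L) + G₁.adjMatrix L).det
      = ∏ v, (x - ψ (β₁ - lam v)) := by
    rw [← adjMatrix_map_ringHom G₁ ψ,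
      helper_det_prod_add ψ (x - ψ β₁) (G₁.adjMatrix ℝ) lam hA₁]
    exact Finset.prod_congr rfl fun v _ => by
      rw [hβ₁]; simp only [_root_.map_sub, _root_.map_add, _root_.map_mul, _root_.map_natCast, _root_.map_ofNat]; ring
  have hdetN₂ : ((x - ψ β₂) • (1 : Matrix V₂ V₂ L) + G₂.adjMatrix L).det
      = ∏ v, (x - ψ (β₂ - mu v)) := by
    rw [← adjMatrix_map_ringHom G₂ ψ,
      helper_det_prod_add ψ (x - ψ β₂) (G₂.adjMatrix ℝ) mu hA₂]
    exact Finset.prod_congr rfl fun v _ => by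
      rw [hβ₂]; simp only [_root_.map_sub, _root_.map_add, _root_.map_mul, _root_.map_natCast, _root_.map_ofNat]; ring
  have hdetN₁ne : ((x - ψ β₁) • (1 : Matrix V₁ V₁ L) + G₁.adjMatrix L).det ≠ 0 := by
    rw [hdetN₁]
    exact Finset.prod_ne_zero_iff.mpr fun v _ => hxc _
  have hdetN₂ne : ((x - ψ β₂) • (1 : Matrix V₂ V₂ L) + G₂.adjMatrix L).det ≠ 0 := by
    rw [hdetN₂]
    exact Finset.prod_ne_zero_iff.mpr fun v _ => hxc _
  -- E₂ determinant
  have hdetE₂ : (((x - ψ β₂) • (1 : Matrix V₂ V₂ L) + G₂.adjMatrix L)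
        - (2:L) • Matrix.of (fun _ _ => (1:L))).det
      = ((x - ψ β₂) • (1 : Matrix V₂ V₂ L) + G₂.adjMatrix L).det
        * (1 - 2 * (Fintype.card V₂ : L) / (x - ψ δ₂)) :=
    helper_det_sub_ones _ 2 (x - ψ δ₂) (hxc δ₂) hdetN₂ne hN₂vec
  have hg₂ : x - ψ γ₂ = (x - ψ δ₂) - 2 * (Fintype.card V₂ : L) := by
    rw [hγ₂]
    simp only [_root_.map_add, _root_.map_mul, _root_.map_ofNat, hψm₂]
    ring
  have hfac₂ : (1 - 2 * (Fintype.card V₂ : L) / (x - ψ δ₂)) = (x - ψ γ₂) / (x - ψ δ₂) := by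
    rw [hg₂]
    field_simp [hxc δ₂]
  have hdetE₂ne : (((x - ψ β₂) • (1 : Matrix V₂ V₂ L) + G₂.adjMatrix L)
        - (2:L) • Matrix.of (fun _ _ => (1:L))).det ≠ 0 := by
    rw [hdetE₂, hfac₂]
    exact mul_ne_zero hdetN₂ne (div_ne_zero (hxc γ₂) (hxc δ₂))
  have hE₂vec : (((x - ψ β₂) • (1 : Matrix V₂ V₂ L) + G₂.adjMatrix L)
        - (2:L) • Matrix.of (fun _ _ => (1:L))) *ᵥ (fun _ => (1:L))
      = fun _ => (x - ψ γ₂) := by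
    rw [Matrix.sub_mulVec, Matrix.smul_mulVec, ones_mulVec_ones, hN₂vec]
    funext i
    simp only [Pi.sub_apply, Pi.smul_apply, smul_eq_mul]
    rw [hg₂]
  haveI : Invertible (((x - ψ β₂) • (1 : Matrix V₂ V₂ L) + G₂.adjMatrix L)
        - (2:L) • Matrix.of (fun _ _ => (1:L))) :=
    Matrix.invertibleOfIsUnitDet _ (isUnit_iff_ne_zero.mpr hdetE₂ne)
  have hinvvec := helper_inv_mulVec_ones _ (x - ψ γ₂) hdetE₂ne (hxc γ₂) hE₂vec
  have hrowE : ∀ k, ∑ l, ((((x - ψ β₂) • (1 : Matrix V₂ V₂ L) + G₂.adjMatrix L)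
        - (2:L) • Matrix.of (fun _ _ => (1:L)) : Matrix V₂ V₂ L))⁻¹ k l = (x - ψ γ₂)⁻¹ := by
    intro k
    have := congrFun hinvvec k
    simpa [Matrix.mulVec, dotProduct] using this
  have hJEJ : (Matrix.of fun _ _ => (1:L) : Matrix V₁ V₂ L)
        * (((x - ψ β₂) • (1 : Matrix V₂ V₂ L) + G₂.adjMatrix L)
            - (2:L) • Matrix.of (fun _ _ => (1:L)))⁻¹
        * (Matrix.of fun _ _ => (1:L) : Matrix V₂ V₁ L)
      = ((Fintype.card V₂ : L) * (x - ψ γ₂)⁻¹)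
          • (Matrix.of fun _ _ => (1:L) : Matrix V₁ V₁ L) := by
    generalize hW : (((x - ψ β₂) • (1 : Matrix V₂ V₂ L) + G₂.adjMatrix L)
        - (2:L) • Matrix.of (fun _ _ => (1:L)) : Matrix V₂ V₂ L)⁻¹ = W
    rw [hW] at hrowE
    ext i j
    simp only [Matrix.mul_apply, Matrix.of_apply, Matrix.smul_apply, one_mul, mul_one,
      smul_eq_mul]
    rw [Finset.sum_comm]
    simp [hrowE, Finset.card_univ]
  -- block form
  have hQ := Q_join_block G₁ G₂ hreg₁ hreg₂ w₁ w₂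
  have hblocks : x • (1 : Matrix (V₁ ⊕ V₂) (V₁ ⊕ V₂) L)
      - (distSignlessLaplacian (joinGraph G₁ G₂)).map ψ
      = Matrix.fromBlocks
          (((x - ψ β₁) • (1 : Matrix V₁ V₁ L) + G₁.adjMatrix L)
            - (2:L) • Matrix.of (fun _ _ => (1:L)))
          (-(Matrix.of fun _ _ => (1:L)))
          (-(Matrix.of fun _ _ => (1:L)))
          (((x - ψ β₂) • (1 : Matrix V₂ V₂ L) + G₂.adjMatrix L)
            - (2:L) • Matrix.of (fun _ _ => (1:L))) := by
    rw [hQ]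
    ext (i | i) (j | j)
    · by_cases h : i = j <;> by_cases hadj : G₁.Adj i j <;>
        simp [Matrix.sub_apply, Matrix.smul_apply, Matrix.one_apply, Matrix.map_apply,
          Matrix.add_apply, SimpleGraph.adjMatrix_apply, Matrix.of_apply, h, hadj,
          apply_ite ψ, _root_.map_sub, _root_.map_add, _root_.map_mul, _root_.map_one, _root_.map_zero, _root_.map_ofNat,
          Matrix.fromBlocks_apply₁₁, hβ₁, hm₁, hm₂, _root_.map_natCast] <;> ring
    · simp [Matrix.sub_apply, Matrix.smul_apply, Matrix.one_apply, Matrix.map_apply,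
        Matrix.fromBlocks_apply₁₂, _root_.map_one]
    · simp [Matrix.sub_apply, Matrix.smul_apply, Matrix.one_apply, Matrix.map_apply,
        Matrix.fromBlocks_apply₂₁, _root_.map_one]
    · by_cases h : i = j <;> by_cases hadj : G₂.Adj i j <;>
        simp [Matrix.sub_apply, Matrix.smul_apply, Matrix.one_apply, Matrix.map_apply,
          Matrix.add_apply, SimpleGraph.adjMatrix_apply, Matrix.of_apply, h, hadj,
          apply_ite ψ, _root_.map_sub, _root_.map_add, _root_.map_mul, _root_.map_one, _root_.map_zero, _root_.map_ofNat,
          Matrix.fromBlocks_apply₂₂, hβ₂, hm₁, hm₂, _root_.map_natCast] <;> ring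
  -- main determinant computation
  have hmain : Φ ((distSignlessLaplacian (joinGraph G₁ G₂)).charpoly)
      = (((x - ψ β₂) • (1 : Matrix V₂ V₂ L) + G₂.adjMatrix L)
          - (2:L) • Matrix.of (fun _ _ => (1:L))).det
        * (((x - ψ β₁) • (1 : Matrix V₁ V₁ L) + G₁.adjMatrix L).det
          * (1 - ((2:L) + (Fintype.card V₂ : L) * (x - ψ γ₂)⁻¹)
              * (Fintype.card V₁ : L) / (x - ψ δ₁))) := by
    rw [← hφeval, ← helper_det_smul_one_sub_map ψ x, hblocks, Matrix.det_fromBlocks₂₂]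
    congr 1
    rw [Matrix.invOf_eq_nonsing_inv, Matrix.neg_mul, Matrix.mul_neg, Matrix.neg_mul, neg_neg, hJEJ]
    have h2 : (((x - ψ β₁) • (1 : Matrix V₁ V₁ L) + G₁.adjMatrix L)
          - (2:L) • Matrix.of (fun _ _ => (1:L)))
        - ((Fintype.card V₂ : L) * (x - ψ γ₂)⁻¹)
            • (Matrix.of fun _ _ => (1:L) : Matrix V₁ V₁ L)
        = ((x - ψ β₁) • (1 : Matrix V₁ V₁ L) + G₁.adjMatrix L)
          - (((2:L) + (Fintype.card V₂ : L) * (x - ψ γ₂)⁻¹))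
              • (Matrix.of fun _ _ => (1:L) : Matrix V₁ V₁ L) := by
      rw [sub_sub, ← add_smul]
    rw [h2, helper_det_sub_ones _ _ (x - ψ δ₁) (hxc δ₁) hdetN₁ne hN₁vec]
  -- image of RHS
  have hP₁ : Φ (((Finset.univ.erase w₁).val.map fun v =>
        (X : ℝ[X]) - C (2 * m₁ + m₂ - (r₁ : ℝ) - lam v - 4)).prod)
      = ∏ v ∈ Finset.univ.erase w₁, (x - ψ (β₁ - lam v)) := by
    rw [map_multiset_prod, Multiset.map_map, Finset.prod_eq_multiset_prod]
    congr 1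
    apply Multiset.map_congr rfl
    intro v _
    rw [Function.comp_apply, hXC]
    have hval : 2 * m₁ + m₂ - (r₁ : ℝ) - lam v - 4 = β₁ - lam v := by rw [hβ₁]; ring
    rw [hval]
  have hP₂ : Φ (((Finset.univ.erase w₂).val.map fun v =>
        (X : ℝ[X]) - C (2 * m₂ + m₁ - (r₂ : ℝ) - mu v - 4)).prod)
      = ∏ v ∈ Finset.univ.erase w₂, (x - ψ (β₂ - mu v)) := by
    rw [map_multiset_prod, Multiset.map_map, Finset.prod_eq_multiset_prod]
    congr 1
    apply Multiset.map_congr rfl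
    intro v _
    rw [Function.comp_apply, hXC]
    have hval : 2 * m₂ + m₁ - (r₂ : ℝ) - mu v - 4 = β₂ - mu v := by rw [hβ₂]; ring
    rw [hval]
  -- splitting off the w factors
  have hsplit₁ : (∏ v, (x - ψ (β₁ - lam v)))
      = (x - ψ δ₁) * ∏ v ∈ Finset.univ.erase w₁, (x - ψ (β₁ - lam v)) := by
    rw [← Finset.mul_prod_erase Finset.univ _ (Finset.mem_univ w₁), hw₁, hδ₁]
  have hsplit₂ : (∏ v, (x - ψ (β₂ - mu v)))
      = (x - ψ δ₂) * ∏ v ∈ Finset.univ.erase w₂, (x - ψ (β₂ - mu v)) := by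
    rw [← Finset.mul_prod_erase Finset.univ _ (Finset.mem_univ w₂), hw₂, hδ₂]
  -- the quadratic factor
  have e1 : ψ ρp + ψ ρm
      = (ψ δ₁ + 2 * (Fintype.card V₁ : L)) + (ψ δ₂ + 2 * (Fintype.card V₂ : L)) := by
    have h' : ρp + ρm = (δ₁ + 2 * m₁) + (δ₂ + 2 * m₂) := by
      rw [hsum, hδ₁, hδ₂, hβ₁, hβ₂]; ring
    rw [← _root_.map_add, h']
    simp [_root_.map_add, _root_.map_mul, _root_.map_ofNat, hψm₁, hψm₂]
  have e2 : ψ ρp * ψ ρm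
      = (ψ δ₁ + 2 * (Fintype.card V₁ : L)) * (ψ δ₂ + 2 * (Fintype.card V₂ : L))
        - (Fintype.card V₁ : L) * (Fintype.card V₂ : L) := by
    have h' : ρp * ρm = (δ₁ + 2 * m₁) * (δ₂ + 2 * m₂) - m₁ * m₂ := by
      rw [hprod, hδ₁, hδ₂, hβ₁, hβ₂]; ring
    rw [← _root_.map_mul, h']
    simp [_root_.map_sub, _root_.map_add, _root_.map_mul, _root_.map_ofNat, hψm₁, hψm₂]
  have hquad : (x - ψ ρp) * (x - ψ ρm)
      = ((x - ψ δ₁) - 2 * (Fintype.card V₁ : L))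
          * ((x - ψ δ₂) - 2 * (Fintype.card V₂ : L))
        - (Fintype.card V₁ : L) * (Fintype.card V₂ : L) := by
    linear_combination e2 - x * e1
  -- put everything together
  rw [hmain, _root_.map_mul, _root_.map_mul, hP₁, hP₂, _root_.map_mul, hXC, hXC, hdetE₂, hfac₂, hdetN₂, hsplit₂,
    hdetN₁, hsplit₁, hquad]
  have hg₂ne : (x - ψ δ₂) - 2 * (Fintype.card V₂ : L) ≠ 0 := by
    rw [← hg₂]; exact hxc γ₂
  rw [hg₂]
  field_simp [hxc δ₁, hxc δ₂, hg₂ne]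
  ring

end MainCalc

lemma main_calc {V₁ V₂ : Type*} [Fintype V₁] [DecidableEq V₁] [Fintype V₂] [DecidableEq V₂]
    (G₁ : SimpleGraph V₁) (G₂ : SimpleGraph V₂)
    [DecidableRel G₁.Adj] [DecidableRel G₂.Adj] {r₁ r₂ : ℕ}
    (hreg₁ : G₁.IsRegularOfDegree r₁) (hreg₂ : G₂.IsRegularOfDegree r₂)
    (lam : V₁ → ℝ) (mu : V₂ → ℝ)
    (hA₁ : (G₁.adjMatrix ℝ).charpoly
      = (Finset.univ.val.map fun v => (X : ℝ[X]) - C (lam v)).prod)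
    (hA₂ : (G₂.adjMatrix ℝ).charpoly
      = (Finset.univ.val.map fun v => (X : ℝ[X]) - C (mu v)).prod)
    (w₁ : V₁) (hw₁ : lam w₁ = r₁) (w₂ : V₂) (hw₂ : mu w₂ = r₂)
    (ρp ρm : ℝ)
    (hsum : ρp + ρm = (4 * (Fintype.card V₁ : ℝ) + (Fintype.card V₂ : ℝ) - 2 * r₁ - 4)
        + (4 * (Fintype.card V₂ : ℝ) + (Fintype.card V₁ : ℝ) - 2 * r₂ - 4))
    (hprod : ρp * ρm = (4 * (Fintype.card V₁ : ℝ) + (Fintype.card V₂ : ℝ) - 2 * r₁ - 4)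
        * (4 * (Fintype.card V₂ : ℝ) + (Fintype.card V₁ : ℝ) - 2 * r₂ - 4)
        - (Fintype.card V₁ : ℝ) * (Fintype.card V₂ : ℝ)) :
    (distSignlessLaplacian (joinGraph G₁ G₂)).charpoly =
      ((Finset.univ.erase w₁).val.map fun v =>
          (X : ℝ[X]) - C (2 * (Fintype.card V₁ : ℝ) + (Fintype.card V₂ : ℝ)
            - r₁ - lam v - 4)).prod *
      ((Finset.univ.erase w₂).val.map fun v =>
          (X : ℝ[X]) - C (2 * (Fintype.card V₂ : ℝ) + (Fintype.card V₁ : ℝ)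
            - r₂ - mu v - 4)).prod *
      ((X - C ρp) * (X - C ρm)) := by
  have hinj : Function.Injective (algebraMap (Polynomial ℝ) (FractionRing (Polynomial ℝ))) :=
    IsFractionRing.injective _ _
  apply hinj
  exact main_calc_aux G₁ G₂ hreg₁ hreg₂ lam mu hA₁ hA₂ w₁ hw₁ w₂ hw₂ ρp ρm hsum hprod _
    (fun c hc => Polynomial.X_sub_C_ne_zero c (hinj (by rw [hc, map_zero])))


theorem stmt6 {V₁ V₂ : Type*} [Fintype V₁] [DecidableEq V₁] [Fintype V₂] [DecidableEq V₂]
    (G₁ : SimpleGraph V₁) (G₂ : SimpleGraph V₂)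
    [DecidableRel G₁.Adj] [DecidableRel G₂.Adj]
    (n₁ n₂ : ℕ) (hn₁ : Fintype.card V₁ = n₁) (hn₂ : Fintype.card V₂ = n₂)
    (r₁ r₂ : ℕ) (hreg₁ : G₁.IsRegularOfDegree r₁) (hreg₂ : G₂.IsRegularOfDegree r₂)
    (lam : V₁ → ℝ) (mu : V₂ → ℝ)
    (hlam : (G₁.adjMatrix ℝ).charpoly.roots = Finset.univ.val.map lam)
    (hmu : (G₂.adjMatrix ℝ).charpoly.roots = Finset.univ.val.map mu)
    (w₁ : V₁) (hw₁ : lam w₁ = r₁) (w₂ : V₂) (hw₂ : mu w₂ = r₂)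
    (Δ : ℝ)
    (hΔ : Δ = 9 * (n₁ : ℝ) ^ 2 - 14 * (n₁ : ℝ) * (n₂ : ℝ) - 12 * (n₁ : ℝ) * (r₁ : ℝ)
        + 12 * (n₁ : ℝ) * (r₂ : ℝ) + 9 * (n₂ : ℝ) ^ 2 + 12 * (n₂ : ℝ) * (r₁ : ℝ)
        - 12 * (n₂ : ℝ) * (r₂ : ℝ) + 4 * (r₁ : ℝ) ^ 2 - 8 * (r₁ : ℝ) * (r₂ : ℝ)
        + 4 * (r₂ : ℝ) ^ 2) :
    (distSignlessLaplacian (joinGraph G₁ G₂)).charpoly.roots =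
      ((Finset.univ.erase w₁).val.map fun v =>
          2 * (n₁ : ℝ) + (n₂ : ℝ) - (r₁ : ℝ) - lam v - 4)
      + ((Finset.univ.erase w₂).val.map fun v =>
          2 * (n₂ : ℝ) + (n₁ : ℝ) - (r₂ : ℝ) - mu v - 4)
      + ({5 / 2 * ((n₁ : ℝ) + (n₂ : ℝ)) - (r₁ : ℝ) - (r₂ : ℝ) - 4 + Real.sqrt Δ / 2,
          5 / 2 * ((n₁ : ℝ) + (n₂ : ℝ)) - (r₁ : ℝ) - (r₂ : ℝ) - 4 - Real.sqrt Δ / 2} :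
            Multiset ℝ) := by
  classical
  subst hn₁
  subst hn₂
  have hA₁ : (G₁.adjMatrix ℝ).charpoly
      = (Finset.univ.val.map fun v => (X : ℝ[X]) - C (lam v)).prod := by
    have hm : (G₁.adjMatrix ℝ).charpoly.Monic := (G₁.adjMatrix ℝ).charpoly_monic
    have hcard : (G₁.adjMatrix ℝ).charpoly.roots.card
        = (G₁.adjMatrix ℝ).charpoly.natDegree := by
      rw [hlam, Multiset.card_map, Matrix.charpoly_natDegree_eq_dim]
      exact Finset.card_univ
    have hsp := (Polynomial.splits_iff_card_roots).mpr hcard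
    have h := Polynomial.Splits.eq_prod_roots_of_monic hsp hm
    rw [hlam, Multiset.map_map] at h
    exact h
  have hA₂ : (G₂.adjMatrix ℝ).charpoly
      = (Finset.univ.val.map fun v => (X : ℝ[X]) - C (mu v)).prod := by
    have hm : (G₂.adjMatrix ℝ).charpoly.Monic := (G₂.adjMatrix ℝ).charpoly_monic
    have hcard : (G₂.adjMatrix ℝ).charpoly.roots.card
        = (G₂.adjMatrix ℝ).charpoly.natDegree := by
      rw [hmu, Multiset.card_map, Matrix.charpoly_natDegree_eq_dim]
      exact Finset.card_univ
    have hsp := (Polynomial.splits_iff_card_roots).mpr hcard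
    have h := Polynomial.Splits.eq_prod_roots_of_monic hsp hm
    rw [hmu, Multiset.map_map] at h
    exact h
  have hΔ' : Δ = (3 * (Fintype.card V₁ : ℝ) - 3 * (Fintype.card V₂ : ℝ)
      - 2 * (r₁ : ℝ) + 2 * (r₂ : ℝ)) ^ 2
      + 4 * (Fintype.card V₁ : ℝ) * (Fintype.card V₂ : ℝ) := by
    rw [hΔ]; ring
  have hΔ0 : 0 ≤ Δ := by
    rw [hΔ']; positivity
  have hs : Real.sqrt Δ ^ 2 = Δ := Real.sq_sqrt hΔ0
  have hsum : (5 / 2 * ((Fintype.card V₁ : ℝ) + (Fintype.card V₂ : ℝ)) - (r₁ : ℝ) - (r₂ : ℝ)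
        - 4 + Real.sqrt Δ / 2)
      + (5 / 2 * ((Fintype.card V₁ : ℝ) + (Fintype.card V₂ : ℝ)) - (r₁ : ℝ) - (r₂ : ℝ)
        - 4 - Real.sqrt Δ / 2)
      = (4 * (Fintype.card V₁ : ℝ) + (Fintype.card V₂ : ℝ) - 2 * r₁ - 4)
        + (4 * (Fintype.card V₂ : ℝ) + (Fintype.card V₁ : ℝ) - 2 * r₂ - 4) := by
    ring
  have hprod : (5 / 2 * ((Fintype.card V₁ : ℝ) + (Fintype.card V₂ : ℝ)) - (r₁ : ℝ) - (r₂ : ℝ)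
        - 4 + Real.sqrt Δ / 2)
      * (5 / 2 * ((Fintype.card V₁ : ℝ) + (Fintype.card V₂ : ℝ)) - (r₁ : ℝ) - (r₂ : ℝ)
        - 4 - Real.sqrt Δ / 2)
      = (4 * (Fintype.card V₁ : ℝ) + (Fintype.card V₂ : ℝ) - 2 * r₁ - 4)
        * (4 * (Fintype.card V₂ : ℝ) + (Fintype.card V₁ : ℝ) - 2 * r₂ - 4)
        - (Fintype.card V₁ : ℝ) * (Fintype.card V₂ : ℝ) := by
    linear_combination (-1/4 : ℝ) * hs + (-1/4 : ℝ) * hΔ'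
  have key := main_calc G₁ G₂ hreg₁ hreg₂ lam mu hA₁ hA₂ w₁ hw₁ w₂ hw₂ _ _ hsum hprod
  rw [key]
  have hprodform : ((Finset.univ.erase w₁).val.map fun v =>
          (X : ℝ[X]) - C (2 * (Fintype.card V₁ : ℝ) + (Fintype.card V₂ : ℝ)
            - r₁ - lam v - 4)).prod *
      ((Finset.univ.erase w₂).val.map fun v =>
          (X : ℝ[X]) - C (2 * (Fintype.card V₂ : ℝ) + (Fintype.card V₁ : ℝ)
            - r₂ - mu v - 4)).prod *
      ((X - C (5 / 2 * ((Fintype.card V₁ : ℝ) + (Fintype.card V₂ : ℝ)) - (r₁ : ℝ) - (r₂ : ℝ)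
          - 4 + Real.sqrt Δ / 2))
        * (X - C (5 / 2 * ((Fintype.card V₁ : ℝ) + (Fintype.card V₂ : ℝ)) - (r₁ : ℝ) - (r₂ : ℝ)
          - 4 - Real.sqrt Δ / 2)))
      = (((((Finset.univ.erase w₁).val.map fun v =>
            2 * ((Fintype.card V₁ : ℕ) : ℝ) + ((Fintype.card V₂ : ℕ) : ℝ) - (r₁ : ℝ)
              - lam v - 4)
        + ((Finset.univ.erase w₂).val.map fun v =>
            2 * ((Fintype.card V₂ : ℕ) : ℝ) + ((Fintype.card V₁ : ℕ) : ℝ) - (r₂ : ℝ)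
              - mu v - 4)
        + ({5 / 2 * (((Fintype.card V₁ : ℕ) : ℝ) + ((Fintype.card V₂ : ℕ) : ℝ)) - (r₁ : ℝ)
              - (r₂ : ℝ) - 4 + Real.sqrt Δ / 2,
            5 / 2 * (((Fintype.card V₁ : ℕ) : ℝ) + ((Fintype.card V₂ : ℕ) : ℝ)) - (r₁ : ℝ)
              - (r₂ : ℝ) - 4 - Real.sqrt Δ / 2} : Multiset ℝ))).map
          fun a => (X : ℝ[X]) - C a).prod := by
    rw [Multiset.map_add, Multiset.map_add, Multiset.prod_add, Multiset.prod_add,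
      Multiset.map_map, Multiset.map_map]
    simp [Function.comp]
  rw [hprodform, Polynomial.roots_multiset_prod_X_sub_C]
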